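/- arXiv:2004.10128 — 4 statements merged into one kernel-verified Lean document; each statement's English description precedes it below -/
import Mathlib

section
/- cos(π/7) − cos(2π/7) + cos(2π/21) − cos(5π/21) = 1/2. -/
open Real

lemma two_sin_cos' (a b : ℝ) : 2 * Real.sin a * Real.cos b = Real.sin (a + b) + Real.sin (a - b) := by
  rw [Real.sin_add, Real.sin_sub]; ring

theorem stmt8 : Real.cos (π / 7) - Real.cos (2 * π / 7) + Real.cos (2 * π / 21) - Real.cos (5 * π / 21) = 1 / 2 := by
  have h1 : Real.cos (2 * π / 21) - Real.cos (5 * π / 21) = Real.cos (3 * π / 7) := by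
    rw [Real.cos_sub_cos]
    rw [show (2 * π / 21 + 5 * π / 21) / 2 = π / 6 by ring]
    rw [show (2 * π / 21 - 5 * π / 21) / 2 = -(π / 14) by ring]
    rw [Real.sin_neg, Real.sin_pi_div_six]
    rw [show (3 : ℝ) * π / 7 = π / 2 - π / 14 by ring, Real.cos_pi_div_two_sub]
    ring
  have hs : Real.sin (π / 7) > 0 :=
    Real.sin_pos_of_pos_of_lt_pi (by positivity) (by linarith [Real.pi_pos])
  have e1 : 2 * Real.sin (π / 7) * Real.cos (π / 7) = Real.sin (2 * π / 7) := by
    rw [two_sin_cos', show π / 7 + π / 7 = 2 * π / 7 by ring,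
      show π / 7 - π / 7 = (0 : ℝ) by ring, Real.sin_zero, add_zero]
  have e2 : 2 * Real.sin (π / 7) * Real.cos (2 * π / 7)
      = Real.sin (3 * π / 7) - Real.sin (π / 7) := by
    rw [two_sin_cos', show π / 7 + 2 * π / 7 = 3 * π / 7 by ring,
      show π / 7 - 2 * π / 7 = -(π / 7) by ring, Real.sin_neg]
    ring
  have e3 : 2 * Real.sin (π / 7) * Real.cos (3 * π / 7)
      = Real.sin (3 * π / 7) - Real.sin (2 * π / 7) := by
    rw [two_sin_cos', show π / 7 + 3 * π / 7 = 4 * π / 7 by ring,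
      show π / 7 - 3 * π / 7 = -(2 * π / 7) by ring, Real.sin_neg,
      show (4 : ℝ) * π / 7 = π - 3 * π / 7 by ring, Real.sin_pi_sub]
    ring
  have key : 2 * Real.sin (π / 7) *
      (Real.cos (π / 7) - Real.cos (2 * π / 7) + Real.cos (3 * π / 7))
      = 2 * Real.sin (π / 7) * (1 / 2) := by
    have expand : 2 * Real.sin (π / 7) *
        (Real.cos (π / 7) - Real.cos (2 * π / 7) + Real.cos (3 * π / 7))
        = 2 * Real.sin (π / 7) * Real.cos (π / 7)
          - 2 * Real.sin (π / 7) * Real.cos (2 * π / 7)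
          + 2 * Real.sin (π / 7) * Real.cos (3 * π / 7) := by ring
    rw [expand, e1, e2, e3]; ring
  have h2 : Real.cos (π / 7) - Real.cos (2 * π / 7) + Real.cos (3 * π / 7) = 1 / 2 :=
    mul_left_cancel₀ (by positivity) key
  linarith [h1, h2]
end

section
/- −cos(2π/7) + cos(3π/7) + cos(4π/21) + cos(10π/21) = 1/2. -/
open Real

theorem stmt9 : -Real.cos (2 * π / 7) + Real.cos (3 * π / 7) + Real.cos (4 * π / 21) + Real.cos (10 * π / 21) = 1 / 2 := by
  have hπ := Real.pi_pos
  -- Step 1: cos(4π/21) + cos(10π/21) = cos(π/7)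
  have h1 : Real.cos (4 * π / 21) + Real.cos (10 * π / 21) = Real.cos (π / 7) := by
    have ha : (4 : ℝ) * π / 21 = π / 3 - π / 7 := by ring
    have hb : (10 : ℝ) * π / 21 = π / 3 + π / 7 := by ring
    rw [ha, hb, Real.cos_sub, Real.cos_add, Real.cos_pi_div_three]
    ring

  -- Step 2: cos(π/7) - cos(2π/7) + cos(3π/7) = 1/2
  have hs : Real.sin (π / 7) > 0 :=
    Real.sin_pos_of_pos_of_lt_pi (by positivity) (by nlinarith)
  have s1 := Real.sin_two_mul (π / 7)
  have s2 : Real.sin (3 * π / 7) = Real.sin (2 * π / 7) * Real.cos (π / 7) + Real.cos (2 * π / 7) * Real.sin (π / 7) := by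
    rw [show (3 : ℝ) * π / 7 = 2 * π / 7 + π / 7 by ring, Real.sin_add]
  have s2' : Real.sin (π / 7) = Real.sin (2 * π / 7) * Real.cos (π / 7) - Real.cos (2 * π / 7) * Real.sin (π / 7) := by
    nth_rewrite 1 [show π / 7 = 2 * π / 7 - π / 7 by ring]
    rw [Real.sin_sub]
  have s3 : Real.sin (3 * π / 7) = Real.sin (4 * π / 7) := by
    rw [show (4 : ℝ) * π / 7 = π - 3 * π / 7 by ring, Real.sin_pi_sub]
  have s4 : Real.sin (4 * π / 7) = Real.sin (3 * π / 7) * Real.cos (π / 7) + Real.cos (3 * π / 7) * Real.sin (π / 7) := by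
    rw [show (4 : ℝ) * π / 7 = 3 * π / 7 + π / 7 by ring, Real.sin_add]
  have s4' : Real.sin (2 * π / 7) = Real.sin (3 * π / 7) * Real.cos (π / 7) - Real.cos (3 * π / 7) * Real.sin (π / 7) := by
    nth_rewrite 1 [show (2 : ℝ) * π / 7 = 3 * π / 7 - π / 7 by ring]
    rw [Real.sin_sub]
  have key : 2 * Real.sin (π / 7) * (Real.cos (π / 7) - Real.cos (2 * π / 7) + Real.cos (3 * π / 7)) = 2 * Real.sin (π / 7) * (1 / 2) := by
    have h2 : (2 : ℝ) * (π / 7) = 2 * π / 7 := by ring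
    rw [h2] at s1
    nlinarith [s1, s2, s2', s3, s4, s4']
  have := mul_left_cancel₀ (by positivity : (2 : ℝ) * Real.sin (π / 7) ≠ 0) key
  linarith [h1]
end

section
/- There are no rational numbers A, B, both nonzero, and rational angles a = aπ' and b = bπ' (with a', b' rational) satisfying 0 < a < b < π/2 such that A·cos(a) + B·cos(b) = 0. -/
open Real

set_option maxHeartbeats 2000000 in
open Polynomial IntermediateField in
theorem stmt11 (A B : ℚ) (hA : A ≠ 0) (hB : B ≠ 0) (a' b' : ℚ)
    (ha : 0 < π * (a' : ℝ)) (hab : π * (a' : ℝ) < π * (b' : ℝ)) (hb : π * (b' : ℝ) < π / 2) :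
    (A : ℝ) * Real.cos (π * (a' : ℝ)) + (B : ℝ) * Real.cos (π * (b' : ℝ)) ≠ 0 := by
  intro h
  have hπ := Real.pi_pos
  have ha'R : (0:ℝ) < (a' : ℝ) := by nlinarith
  have hab'R : (a' : ℝ) < (b' : ℝ) := by nlinarith
  have hb'R : (b' : ℝ) < 1/2 := by nlinarith
  have ha' : 0 < a' := by exact_mod_cast ha'R
  have hab' : a' < b' := by exact_mod_cast hab'R
  have hb' : b' < 1/2 := by
    have : ((b':ℚ):ℝ) < (((1:ℚ)/2:ℚ):ℝ) := by push_cast; linarith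
    exact_mod_cast this
  -- cosine facts
  have hcosb_pos : 0 < Real.cos (π * (b' : ℝ)) :=
    Real.cos_pos_of_mem_Ioo ⟨by linarith, hb⟩
  have hcoslt : Real.cos (π * (b' : ℝ)) < Real.cos (π * (a' : ℝ)) :=
    Real.cos_lt_cos_of_nonneg_of_le_pi (le_of_lt ha) (by linarith) hab
  have hcosa_pos : 0 < Real.cos (π * (a' : ℝ)) := lt_trans hcosb_pos hcoslt
  -- the ratio r = cos a / cos b = -B/A is rational and > 1
  set r : ℚ := -B / A with hr_def
  have hA' : (A:ℝ) ≠ 0 := by exact_mod_cast hA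
  have hrR : (r:ℝ) * Real.cos (π * (b' : ℝ)) = Real.cos (π * (a' : ℝ)) := by
    rw [hr_def]; push_cast
    field_simp
    nlinarith [h]
  have hr1 : (1:ℚ) < r := by
    have h1 : (1:ℝ) < (r:ℝ) := by
      nlinarith [hrR, hcosb_pos, hcoslt]
    exact_mod_cast h1
  -- p/q = r in lowest terms
  set p : ℕ := r.num.toNat with hp_def
  set q : ℕ := r.den with hq_def
  have hr_pos : 0 < r := lt_trans one_pos hr1
  have hnum_pos : 0 < r.num := Rat.num_pos.mpr hr_pos
  have hpnum : ((p:ℕ) : ℤ) = r.num := Int.toNat_of_nonneg (le_of_lt hnum_pos)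
  have hq_pos : 0 < q := r.pos
  have hqp : (q:ℚ) * r = p := by
    have h2 := Rat.mul_den_eq_num r
    have h3 : ((p:ℕ):ℚ) = (r.num : ℚ) := by exact_mod_cast congrArg (Int.cast (R := ℚ)) hpnum
    rw [h3, ← h2]; ring
  have hq_lt_p : q < p := by
    have h4 : (q:ℚ) < (p:ℚ) := by
      have h5 : (0:ℚ) < q := by exact_mod_cast hq_pos
      nlinarith [hqp]
    exact_mod_cast h4
  have hp2 : 2 ≤ p := by omega
  have hcop : Nat.Coprime q p := by
    have h6 := r.reduced
    have h7 : r.num.natAbs = p := by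
      rw [hp_def]; omega
    rw [hq_def, ← h7]
    exact (Nat.coprime_comm).mp h6
  -- Bezout
  obtain ⟨x, y, hxy⟩ : ∃ x y : ℤ, (q:ℤ) * x + (p:ℤ) * y = 1 := by
    refine ⟨Nat.gcdA q p, Nat.gcdB q p, ?_⟩
    have h8 := Nat.gcd_eq_gcd_ab q p
    rw [hcop] at h8
    exact_mod_cast h8.symm
  -- q cos a = p cos b (in ℝ)
  have hqcos : (q:ℝ) * Real.cos (π * (a' : ℝ)) = (p:ℝ) * Real.cos (π * (b' : ℝ)) := by
    have h9 : ((q:ℚ):ℝ) * ((r:ℚ):ℝ) = ((p:ℕ):ℝ) := by exact_mod_cast congrArg (Rat.cast (K := ℝ)) hqp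
    push_cast at h9
    nlinarith [hrR]
  -- common denominator: a' = u/n, b' = v/n
  set n : ℕ := a'.den * b'.den with hn_def
  set u : ℕ := a'.num.toNat * b'.den with hu_def
  set v : ℕ := b'.num.toNat * a'.den with hv_def
  have hanum : ((a'.num.toNat : ℕ) : ℤ) = a'.num := Int.toNat_of_nonneg (le_of_lt (Rat.num_pos.mpr ha'))
  have hbnum : ((b'.num.toNat : ℕ) : ℤ) = b'.num := Int.toNat_of_nonneg (le_of_lt (Rat.num_pos.mpr (lt_trans ha' hab')))
  have hn_pos : 0 < n := Nat.mul_pos a'.pos b'.pos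
  have huQ : (u:ℚ) = a' * n := by
    rw [hu_def, hn_def]
    have : ((a'.num.toNat : ℕ) : ℚ) = (a'.num : ℚ) := by exact_mod_cast congrArg (Int.cast (R := ℚ)) hanum
    push_cast [this]
    rw [show a' * ((a'.den:ℚ) * (b'.den:ℚ)) = (a' * a'.den) * b'.den by ring,
      Rat.mul_den_eq_num]
  have hvQ : (v:ℚ) = b' * n := by
    rw [hv_def, hn_def]
    have : ((b'.num.toNat : ℕ) : ℚ) = (b'.num : ℚ) := by exact_mod_cast congrArg (Int.cast (R := ℚ)) hbnum
    push_cast [this]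
    rw [show b' * ((a'.den:ℚ) * (b'.den:ℚ)) = (b' * b'.den) * a'.den by ring,
      Rat.mul_den_eq_num]
  have hnQ : (0:ℚ) < n := by exact_mod_cast hn_pos
  have hu_pos : 0 < u := by
    have : (0:ℚ) < u := by rw [huQ]; exact mul_pos ha' hnQ
    exact_mod_cast this
  have huv : u < v := by
    have : (u:ℚ) < v := by rw [huQ, hvQ]; nlinarith
    exact_mod_cast this
  have h2v : 2 * v < n := by
    have : ((2 * v : ℕ) : ℚ) < n := by push_cast [hvQ]; nlinarith
    exact_mod_cast this
  set N : ℕ := 2 * n with hN_def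
  have hN_pos : 0 < N := by omega
  have hnR : ((n:ℝ)) ≠ 0 := Nat.cast_ne_zero.mpr (by omega)
  have haR : (a' : ℝ) = (u:ℝ) / n := by
    have h10 : ((u:ℚ):ℝ) = ((a' * n : ℚ) : ℝ) := by exact_mod_cast congrArg (Rat.cast (K := ℝ)) huQ
    push_cast at h10
    field_simp
    linarith
  have hbR : (b' : ℝ) = (v:ℝ) / n := by
    have h11 : ((v:ℚ):ℝ) = ((b' * n : ℚ) : ℝ) := by exact_mod_cast congrArg (Rat.cast (K := ℝ)) hvQ
    push_cast at h11
    field_simp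
    linarith
  -- the root of unity
  set ζ : ℂ := Complex.exp (2 * (π:ℝ) * Complex.I / (N:ℕ)) with hζ_def
  have hζ : IsPrimitiveRoot ζ N := Complex.isPrimitiveRoot_exp N (by omega)
  have hNC : ((N:ℂ)) ≠ 0 := Nat.cast_ne_zero.mpr (by omega)
  have hnC : ((n:ℂ)) ≠ 0 := Nat.cast_ne_zero.mpr (by omega)
  have hζpow : ∀ m : ℕ, m ≤ N → ζ ^ m + ζ ^ (N - m) =
      ((2 * Real.cos (π * ((m:ℝ)/n)) : ℝ) : ℂ) := by
    intro m hm
    have h1 : ζ ^ m = Complex.exp (((π * ((m:ℝ)/n) : ℝ) : ℂ) * Complex.I) := by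
      rw [hζ_def, ← Complex.exp_nat_mul]
      congr 1
      push_cast [hN_def]
      rw [hn_def] at hnC
      field_simp
    have h2 : ζ ^ (N - m) = Complex.exp (-(((π * ((m:ℝ)/n) : ℝ) : ℂ) * Complex.I)) := by
      rw [hζ_def, ← Complex.exp_nat_mul]
      rw [show ((N - m : ℕ) : ℂ) * (2 * (π:ℝ) * Complex.I / (N:ℕ)) =
          2 * (π:ℝ) * Complex.I + -(((π * ((m:ℝ)/n) : ℝ) : ℂ) * Complex.I) from by
        rw [Nat.cast_sub hm]
        push_cast [hN_def]
        rw [hn_def] at hnC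
        field_simp
        rw [sub_div, mul_div_cancel_right₀ _ (Nat.cast_ne_zero.mpr (by omega) : (n:ℂ) ≠ 0)]
        ring]
      rw [Complex.exp_add, Complex.exp_two_pi_mul_I, one_mul]
    rw [h1, h2, ← neg_mul, ← Complex.two_cos]
    push_cast [Complex.ofReal_cos]
    ring
  have hsu : ζ ^ u + ζ ^ (N - u) = ((2 * Real.cos (π * (a':ℝ)) : ℝ) : ℂ) := by
    rw [hζpow u (by omega), haR]
  have hsv : ζ ^ v + ζ ^ (N - v) = ((2 * Real.cos (π * (b':ℝ)) : ℝ) : ℂ) := by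
    rw [hζpow v (by omega), hbR]
  -- the key relation at ζ, in ℂ
  have hqpC : (q:ℂ) * (ζ ^ u + ζ ^ (N - u)) = (p:ℂ) * (ζ ^ v + ζ ^ (N - v)) := by
    rw [hsu, hsv]
    have h12 : ((q:ℝ) * (2 * Real.cos (π * (a':ℝ))) : ℝ) = ((p:ℝ) * (2 * Real.cos (π * (b':ℝ))) : ℝ) := by
      nlinarith [hqcos]
    have h13 := congrArg (Complex.ofReal) h12
    push_cast at h13 ⊢
    convert h13 using 1 <;> ring
  -- the number field K = ℚ(ζ)
  have hζintZ : IsIntegral ℤ ζ := ⟨X ^ N - C 1, monic_X_pow_sub_C 1 (by omega), by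
    simp [hζ.pow_eq_one]⟩
  have hζintQ : IsIntegral ℚ ζ := hζintZ.tower_top
  let K : IntermediateField ℚ ℂ := ℚ⟮ζ⟯
  haveI : FiniteDimensional ℚ K := IntermediateField.adjoin.finiteDimensional hζintQ
  let zK : K := IntermediateField.AdjoinSimple.gen ℚ ζ
  have hembz : algebraMap K ℂ zK = ζ := IntermediateField.AdjoinSimple.algebraMap_gen ℚ ζ
  have hinj : Function.Injective (algebraMap K ℂ) := (algebraMap K ℂ).injective
  have hzint : IsIntegral ℤ zK := by
    rw [← isIntegral_algebraMap_iff hinj, hembz]; exact hζintZ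
  -- the element θ = (2 cos a)/p, an algebraic integer
  let suK : K := zK ^ u + zK ^ (N - u)
  let svK : K := zK ^ v + zK ^ (N - v)
  let θ : K := (x : K) * svK + (y : K) * suK
  have hembsu : algebraMap K ℂ suK = ζ ^ u + ζ ^ (N - u) := by
    simp [suK, map_add, map_pow, hembz]
  have hembsv : algebraMap K ℂ svK = ζ ^ v + ζ ^ (N - v) := by
    simp [svK, map_add, map_pow, hembz]
  have hembθ : algebraMap K ℂ θ = (x:ℂ) * (ζ ^ v + ζ ^ (N - v)) + (y:ℂ) * (ζ ^ u + ζ ^ (N - u)) := by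
    simp [θ, map_add, map_mul, hembsu, hembsv, map_intCast]
  have hpθ : (p : K) * θ = suK := by
    apply hinj
    rw [map_mul, hembθ, hembsu, map_natCast]
    have hxyC : (q:ℂ) * (x:ℂ) + (p:ℂ) * (y:ℂ) = 1 := by exact_mod_cast congrArg (Int.cast (R := ℂ)) hxy
    linear_combination (-(x:ℂ)) * hqpC + (ζ ^ u + ζ ^ (N - u)) * hxyC
  have hθint : IsIntegral ℤ θ := by
    have hxint : IsIntegral ℤ ((x:ℤ) : K) := by
      have := isIntegral_algebraMap (R := ℤ) (A := K) (x := x)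
      rwa [algebraMap_int_eq, eq_intCast] at this
    have hyint : IsIntegral ℤ ((y:ℤ) : K) := by
      have := isIntegral_algebraMap (R := ℤ) (A := K) (x := y)
      rwa [algebraMap_int_eq, eq_intCast] at this
    exact ((hxint.mul ((hzint.pow v).add (hzint.pow (N - v)))).add
      (hyint.mul ((hzint.pow u).add (hzint.pow (N - u)))))
  have hθ0 : θ ≠ 0 := by
    intro h0
    have h14 : suK = 0 := by rw [← hpθ, h0, mul_zero]
    have h15 := hembsu
    rw [h14, map_zero] at h15
    rw [hsu] at h15
    have h16 : (2 * Real.cos (π * (a':ℝ)) : ℝ) = 0 := by exact_mod_cast h15.symm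
    nlinarith
  -- bound on conjugates
  have hbound : ∀ σ : K →ₐ[ℚ] ℂ, ‖σ θ‖ < 1 := by
    intro σ
    have hσinj : Function.Injective σ := RingHom.injective (σ : K →+* ℂ)
    set ξ : ℂ := σ zK with hξ_def
    have hzN : zK ^ N = 1 := by
      apply hinj
      rw [map_pow, hembz, map_one, hζ.pow_eq_one]
    have hξN : ξ ^ N = 1 := by rw [hξ_def, ← map_pow, hzN, map_one]
    have habsξ : ‖ξ‖ = 1 := Complex.norm_eq_one_of_pow_eq_one hξN (by omega)
    set w : ℂ := ξ ^ (N - 2 * u) with hw_def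
    have hw1 : w ≠ 1 := by
      intro hw
      have h17 : zK ^ (N - 2 * u) = 1 := by
        apply hσinj
        rw [map_pow, ← hξ_def, ← hw_def, hw, map_one]
      have h18 : ζ ^ (N - 2 * u) = 1 := by
        have := congrArg (algebraMap K ℂ) h17
        rwa [map_pow, hembz, map_one] at this
      exact hζ.pow_ne_one_of_pos_of_lt (by omega) (by omega) h18
    have habsw : ‖w‖ = 1 := by
      rw [hw_def, norm_pow, habsξ, one_pow]
    have hwlt : ‖1 + w‖ < 2 := by
      have hre_le : w.re ≤ 1 := by
        calc w.re ≤ ‖w‖ := Complex.re_le_norm w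
        _ = 1 := habsw
      have hsq : w.re ^ 2 + w.im ^ 2 = 1 := by
        have h19 := Complex.sq_norm w
        rw [habsw] at h19
        simpa [Complex.normSq_apply, sq] using h19.symm
      have hre_lt : w.re < 1 := by
        rcases lt_or_eq_of_le hre_le with h20 | h20
        · exact h20
        · exfalso
          apply hw1
          have him : w.im = 0 := by nlinarith
          apply Complex.ext <;> simp [← h20, him]
      have h21 : ‖1 + w‖ ^ 2 = 2 + 2 * w.re := by
        rw [Complex.sq_norm]
        simp [Complex.normSq_apply]
        nlinarith
      nlinarith [norm_nonneg (1 + w)]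
    have hfac : (p:ℂ) * σ θ = ξ ^ u * (1 + w) := by
      have h22 : σ ((p:K) * θ) = σ suK := congrArg σ hpθ
      rw [map_mul, map_natCast] at h22
      rw [h22]
      have h23 : σ suK = ξ ^ u + ξ ^ (N - u) := by
        simp [suK, map_add, map_pow, hξ_def]
      rw [h23, hw_def, mul_add, mul_one, ← pow_add]
      congr 2
      omega
    have h24 : (p:ℝ) * ‖σ θ‖ = ‖1 + w‖ := by
      have := congrArg norm hfac
      rwa [norm_mul, norm_mul, norm_pow, habsξ, one_pow, one_mul, Complex.norm_natCast] at this
    have hpR : (2:ℝ) ≤ (p:ℝ) := by exact_mod_cast hp2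
    nlinarith [norm_nonneg (σ θ)]
  -- conclude via the norm
  have hnorm_int : IsIntegral ℤ (Algebra.norm ℚ θ) := Algebra.isIntegral_norm ℚ hθint
  obtain ⟨z, hz⟩ := IsIntegrallyClosed.isIntegral_iff.mp hnorm_int
  have hz0 : z ≠ 0 := by
    intro h25
    rw [h25, map_zero] at hz
    exact (Algebra.norm_ne_zero_iff.mpr hθ0) hz.symm
  have hprod := congrArg norm (Algebra.norm_eq_prod_embeddings ℚ ℂ θ)
  rw [norm_prod] at hprod
  have hlt : ∏ σ : K →ₐ[ℚ] ℂ, ‖σ θ‖ < 1 := by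
    haveI : Nonempty (K →ₐ[ℚ] ℂ) := ⟨K.val⟩
    by_cases hzero : ∃ σ : K →ₐ[ℚ] ℂ, ‖σ θ‖ = 0
    · obtain ⟨σ0, hσ0⟩ := hzero
      rw [Finset.prod_eq_zero (Finset.mem_univ σ0) hσ0]
      norm_num
    · push_neg at hzero
      calc ∏ σ : K →ₐ[ℚ] ℂ, ‖σ θ‖ < ∏ _σ : K →ₐ[ℚ] ℂ, (1:ℝ) := by
            refine Finset.prod_lt_prod_of_nonempty (fun σ _ => ?_) (fun σ _ => hbound σ) Finset.univ_nonempty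
            exact lt_of_le_of_ne (norm_nonneg _) (Ne.symm (hzero σ))
      _ = 1 := Finset.prod_const_one
  have hge : (1:ℝ) ≤ ‖algebraMap ℚ ℂ (Algebra.norm ℚ θ)‖ := by
    rw [← hz]
    have h26 : algebraMap ℚ ℂ (algebraMap ℤ ℚ z) = ((z:ℤ):ℂ) := by
      push_cast
      simp
    rw [h26, Complex.norm_intCast]
    rw [← Int.cast_abs]
    exact_mod_cast Int.one_le_abs hz0
  rw [hprod] at hge
  linarith
end

section
/- Let n ≥ 3 be an integer and let γ₀,…,γ_{n−1} ∈ [0,1) be offsets. Define the n-fold directions ζ_n = exp(2πi/n) if n is odd and ζ_n = exp(πi/n) if n is even, and the grid lines H_i = { z ∈ ℂ : Re(z·conj(ζ_n^i)) − γ_i ∈ ℤ }. Suppose that for all integers p, q with 0 < q < p < n and all r₀ ∈ ℤ − γ₀, r_q ∈ ℤ − γ_q, r_p ∈ ℤ − γ_p, we have (when n is odd) r₀·sin(2(p−q)π/n) + r_p·sin(2qπ/n) − r_q·sin(2pπ/n) ≠ 0, and (when n is even) r₀·sin((p−q)π/n) + r_p·sin(qπ/n) − r_q·sin(pπ/n)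 ≠ 0, where this condition is imposed after rotating so that the three grid families are indexed 0, q, p. Then no point of ℂ lies on three lines of the multigrid coming from three distinct grid families: concretely, there is no z ∈ ℂ and no triple of distinct indices i < j < k in {0,…,n−1} with Re(z·conj(ζ_n^i)) − γ_i ∈ ℤ, Re(z·conj(ζ_n^j)) − γ_j ∈ ℤ, and Re(z·conj(ζ_n^k)) − γ_k ∈ ℤ. -/
open Real Complex

theorem stmt16 (n : ℕ) (hn : 3 ≤ n) (γ : Fin n → ℝ)
    (hγ : ∀ i, γ i ∈ Set.Ico (0 : ℝ) 1)
    (ζ : ℂ)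
    (hζ : ζ = if Odd n then Complex.exp (2 * Real.pi * Complex.I / n)
              else Complex.exp (Real.pi * Complex.I / n))
    (htrig : ∀ i j k : Fin n, i < j → j < k →
      ∀ r₀ rq rp : ℝ,
        (∃ m : ℤ, r₀ = (m : ℝ) - γ i) →
        (∃ m : ℤ, rq = (m : ℝ) - γ j) →
        (∃ m : ℤ, rp = (m : ℝ) - γ k) →
        (Odd n →
          r₀ * Real.sin (2 * ((k : ℝ) - (j : ℝ)) * Real.pi / n)
            + rp * Real.sin (2 * ((j : ℝ) - (i : ℝ)) * Real.pi / n)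
            - rq * Real.sin (2 * ((k : ℝ) - (i : ℝ)) * Real.pi / n) ≠ 0) ∧
        (Even n →
          r₀ * Real.sin (((k : ℝ) - (j : ℝ)) * Real.pi / n)
            + rp * Real.sin (((j : ℝ) - (i : ℝ)) * Real.pi / n)
            - rq * Real.sin (((k : ℝ) - (i : ℝ)) * Real.pi / n) ≠ 0)) :
    ¬ ∃ (z : ℂ) (i j k : Fin n), i < j ∧ j < k ∧
      (∃ m : ℤ, (z * (starRingEnd ℂ) (ζ ^ (i : ℕ))).re - γ i = (m : ℝ)) ∧
      (∃ m : ℤ, (z * (starRingEnd ℂ) (ζ ^ (j : ℕ))).re - γ j = (m : ℝ)) ∧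
      (∃ m : ℤ, (z * (starRingEnd ℂ) (ζ ^ (k : ℕ))).re - γ k = (m : ℝ)) := by
  rintro ⟨z, i, j, k, hij, hjk, ⟨mi, hmi⟩, ⟨mj, hmj⟩, ⟨mk, hmk⟩⟩
  set θ : ℝ := if Odd n then 2 * Real.pi / n else Real.pi / n with hθ
  have hζθ : ζ = Complex.exp (↑θ * Complex.I) := by
    rw [hζ, hθ]
    split_ifs <;> push_cast <;> ring_nf
  have key : ∀ m : ℕ, (z * (starRingEnd ℂ) (ζ ^ m)).re
      = z.re * Real.cos (m * θ) + z.im * Real.sin (m * θ) := by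
    intro m
    have h1 : ζ ^ m = Complex.exp (↑((m : ℝ) * θ) * Complex.I) := by
      rw [hζθ, ← Complex.exp_nat_mul]
      push_cast
      ring_nf
    rw [h1]
    rw [show (starRingEnd ℂ) (Complex.exp (↑((m : ℝ) * θ) * Complex.I))
        = Complex.exp (↑(-((m : ℝ) * θ)) * Complex.I) by
      rw [← Complex.exp_conj]; push_cast; simp]
    rw [Complex.mul_re, Complex.exp_ofReal_mul_I_re, Complex.exp_ofReal_mul_I_im,
      Real.cos_neg, Real.sin_neg]
    ring
  have H := htrig i j k hij hjk
      (-(z * (starRingEnd ℂ) (ζ ^ (i : ℕ))).re)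
      (-(z * (starRingEnd ℂ) (ζ ^ (j : ℕ))).re)
      (-(z * (starRingEnd ℂ) (ζ ^ (k : ℕ))).re)
      ⟨-mi, by push_cast; linarith⟩ ⟨-mj, by push_cast; linarith⟩
      ⟨-mk, by push_cast; linarith⟩
  rcases Nat.even_or_odd n with hpar | hpar
  · refine H.2 hpar ?_
    have hθ' : θ = Real.pi / n := by rw [hθ, if_neg (Nat.not_odd_iff_even.mpr hpar)]
    have e1 : ((k : ℝ) - (j : ℝ)) * Real.pi / n = (k : ℝ) * θ - (j : ℝ) * θ := by
      rw [hθ']; ring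
    have e2 : ((j : ℝ) - (i : ℝ)) * Real.pi / n = (j : ℝ) * θ - (i : ℝ) * θ := by
      rw [hθ']; ring
    have e3 : ((k : ℝ) - (i : ℝ)) * Real.pi / n = (k : ℝ) * θ - (i : ℝ) * θ := by
      rw [hθ']; ring
    rw [e1, e2, e3, key, key, key, Real.sin_sub, Real.sin_sub, Real.sin_sub]
    ring
  · refine H.1 hpar ?_
    have hθ' : θ = 2 * Real.pi / n := by simp [hθ, hpar]
    have e1 : 2 * ((k : ℝ) - (j : ℝ)) * Real.pi / n = (k : ℝ) * θ - (j : ℝ) * θ := by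
      rw [hθ']; ring
    have e2 : 2 * ((j : ℝ) - (i : ℝ)) * Real.pi / n = (j : ℝ) * θ - (i : ℝ) * θ := by
      rw [hθ']; ring
    have e3 : 2 * ((k : ℝ) - (i : ℝ)) * Real.pi / n = (k : ℝ) * θ - (i : ℝ) * θ := by
      rw [hθ']; ring
    rw [e1, e2, e3, key, key, key, Real.sin_sub, Real.sin_sub, Real.sin_sub]
    ring
end
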